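/- Let G be a group, H ≤ G a subgroup, and s₁,…,sₙ elements of G. For each pair (i,j) let G(sᵢ,sⱼ) = {t ∈ G : t sᵢ t⁻¹ = sⱼ}. If G = ⋃_{i,j} G(sᵢ,sⱼ), then some sᵢ has a finite conjugacy class. -/

import Mathlib

open scoped Pointwise

/-- If a group `G` is covered by the sets `G(sᵢ,sⱼ) = {t : t sᵢ t⁻¹ = sⱼ}` for finitely
many elements `s₁, …, sₙ`, then some `sᵢ` has a finite conjugacy class. -/
theorem stmt13 {G : Type*} [Group G] {n : ℕ} (s : Fin n → G)
    (hcover : ∀ t : G, ∃ i j : Fin n, t * s i * t⁻¹ = s j) :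
    ∃ i : Fin n, {g : G | IsConj (s i) g}.Finite := by
  classical
  -- index type: pairs (i,j); subgroup: centralizer of s i; coset rep: some t with t sᵢ t⁻¹ = sⱼ
  set H : Fin n × Fin n → Subgroup G := fun p => Subgroup.centralizer {s p.1} with hH
  set g : Fin n × Fin n → G := fun p =>
    if h : ∃ t : G, t * s p.1 * t⁻¹ = s p.2 then h.choose else 1 with hg
  have hcovers : ⋃ p ∈ (Finset.univ : Finset (Fin n × Fin n)),
      (g p) • (H p : Set G) = Set.univ := by
    apply Set.eq_univ_of_forall
    intro t
    obtain ⟨i, j, hij⟩ := hcover t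
    have hex : ∃ u : G, u * s i * u⁻¹ = s j := ⟨t, hij⟩
    refine Set.mem_biUnion (Finset.mem_univ (i, j)) ?_
    have hgij : g (i, j) * s i * (g (i, j))⁻¹ = s j := by
      simp only [hg, dif_pos hex]
      exact hex.choose_spec
    rw [Set.mem_smul_set_iff_inv_smul_mem]
    show (g (i, j))⁻¹ * t ∈ Subgroup.centralizer {s i}
    rw [Subgroup.mem_centralizer_singleton_iff]
    have h1 : t * s i * t⁻¹ = g (i, j) * s i * (g (i, j))⁻¹ := by rw [hij, hgij]
    calc (g (i, j))⁻¹ * t * s i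
        = (g (i, j))⁻¹ * (t * s i * t⁻¹) * t := by group
      _ = (g (i, j))⁻¹ * (g (i, j) * s i * (g (i, j))⁻¹) * t := by rw [h1]
      _ = s i * ((g (i, j))⁻¹ * t) := by group
  obtain ⟨⟨i, j⟩, -, hfi⟩ := Subgroup.exists_finiteIndex_of_leftCoset_cover hcovers
  refine ⟨i, ?_⟩
  -- finite index centralizer ⇒ finite conjugacy class
  haveI : Subgroup.FiniteIndex (Subgroup.centralizer {s i}) := hfi
  haveI : Finite (G ⧸ Subgroup.centralizer {s i}) :=
    Subgroup.finite_quotient_of_finiteIndex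
  have hconst : ∀ a b : G,
      (QuotientGroup.mk a : G ⧸ Subgroup.centralizer {s i}) = QuotientGroup.mk b →
      a * s i * a⁻¹ = b * s i * b⁻¹ := by
    intro a b hab
    have h := QuotientGroup.leftRel_apply.mp (Quotient.exact hab)
    rw [Subgroup.mem_centralizer_singleton_iff] at h
    have : s i * (a⁻¹ * b) = a⁻¹ * b * s i := h.symm
    calc a * s i * a⁻¹ = a * (s i * (a⁻¹ * b)) * b⁻¹ := by group
      _ = a * (a⁻¹ * b * s i) * b⁻¹ := by rw [this]
      _ = b * s i * b⁻¹ := by group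
  let f : G ⧸ Subgroup.centralizer {s i} → G :=
    Quotient.lift (fun a : G => a * s i * a⁻¹) (fun a b hab =>
      hconst a b (Quotient.sound hab))
  have hsub : {g : G | IsConj (s i) g} ⊆ Set.range f := by
    rintro x ⟨c, hc⟩
    have hc' : (c : G) * s i = x * c := hc
    refine ⟨QuotientGroup.mk (c : G), ?_⟩
    show (c : G) * s i * (c : G)⁻¹ = x
    rw [hc']
    group
  exact (Set.finite_range f).subset hsub
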